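/- Let 2 ≤ s ≤ r be integers and let A ⊆ F₂^r be a generic (r,s)-set. Then for every (r−s)-dimensional linear subspace V of F₂^r, the set A meets at least 2^{s−1} distinct cosets of V in F₂^r. -/

import Mathlib

/-- `A ⊆ F₂^r` is a *generic `(r,s)`-erasure correcting set* if for every `r × s` matrix `M`
over `F₂` of rank `s` there is `a ∈ A` such that the row vector `a·M` has Hamming weight `1`. -/
def IsGenericSet (r s : ℕ) (A : Set (Fin r → ZMod 2)) : Prop :=
  ∀ M : Matrix (Fin r) (Fin s) (ZMod 2), M.rank = s →
    ∃ a ∈ A, hammingNorm (Matrix.vecMul a M) = 1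

/-- `F(r,s)`: the minimum cardinality of a generic `(r,s)`-set. -/
noncomputable def Fgen (r s : ℕ) : ℕ :=
  sInf {n | ∃ A : Finset (Fin r → ZMod 2), IsGenericSet r s ↑A ∧ A.card = n}

/-- The standard bilinear form `⟨x,y⟩ = ∑ i, x i * y i` on `F₂^r`. -/
def bform {r : ℕ} (x y : Fin r → ZMod 2) : ZMod 2 := ∑ i, x i * y i

/-- `A ⊆ F₂^r` is an *(r,s)-set* if for every `s` linearly independent vectors `v₁, …, v_s`
there is `c ∈ A` with `⟨c, v_j⟩ = 1` for all `j`. -/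
def IsRSSet (r s : ℕ) (A : Set (Fin r → ZMod 2)) : Prop :=
  ∀ v : Fin s → (Fin r → ZMod 2), LinearIndependent (ZMod 2) v →
    ∃ c ∈ A, ∀ j, bform c (v j) = 1

/-- `G₁(r,s)`: the minimum cardinality of an `(r,s)`-set. -/
noncomputable def G1 (r s : ℕ) : ℕ :=
  sInf {n | ∃ A : Finset (Fin r → ZMod 2), IsRSSet r s ↑A ∧ A.card = n}

/-- `A ⊆ F₂^r` is an *(r,s)-good set* if for every `s` linearly independent vectors
`v₁, …, v_s` and every `x ∈ F₂^s` there is `c ∈ A` with `⟨c, v_j⟩ = x j` for all `j`. -/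
def IsGoodSet (r s : ℕ) (A : Set (Fin r → ZMod 2)) : Prop :=
  ∀ v : Fin s → (Fin r → ZMod 2), LinearIndependent (ZMod 2) v →
    ∀ x : Fin s → ZMod 2, ∃ c ∈ A, ∀ j, bform c (v j) = x j

/-- `G(r,s)`: the minimum cardinality of an `(r,s)`-good set. -/
noncomputable def Ggood (r s : ℕ) : ℕ :=
  sInf {n | ∃ A : Finset (Fin r → ZMod 2), IsGoodSet r s ↑A ∧ A.card = n}

/-- A linear code `C ⊆ F₂^ι` is *s-wise intersecting* if every `s` linearly independent
codewords have a common coordinate where they are all nonzero. -/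
def IsIntersectingCode {ι : Type*} (s : ℕ) (C : Submodule (ZMod 2) (ι → ZMod 2)) : Prop :=
  ∀ u : Fin s → (ι → ZMod 2), (∀ j, u j ∈ C) → LinearIndependent (ZMod 2) u →
    ∃ i, ∀ j, u j i ≠ 0

/-- `n(k,s)`: the minimum length `n` for which an `s`-wise intersecting `[n,k]` code exists. -/
noncomputable def minIntLen (k s : ℕ) : ℕ :=
  sInf {n | ∃ C : Submodule (ZMod 2) (Fin n → ZMod 2),
    Module.finrank (ZMod 2) C = k ∧ IsIntersectingCode s C}

/-- The Gaussian binomial coefficient `[k choose s]₂` as a real number. -/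
noncomputable def gaussBinom (k s : ℕ) : ℝ :=
  ∏ i ∈ Finset.range s, ((2:ℝ)^(k-i) - 1) / ((2:ℝ)^(s-i) - 1)


lemma norm_one_single {s : ℕ} (w : Fin s → ZMod 2) (h : hammingNorm w = 1) :
    ∃ j, w = Pi.single j 1 := by
  rw [hammingNorm, Finset.card_eq_one] at h
  obtain ⟨j, hj⟩ := h
  have hmem : ∀ i : Fin s, w i ≠ 0 ↔ i = j := by
    intro i
    rw [show (w i ≠ 0) ↔ i ∈ ({i | w i ≠ 0} : Finset (Fin s)) by simp, hj]
    simp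
  have h2 : ∀ u : ZMod 2, u ≠ 0 → u = 1 := by decide
  refine ⟨j, ?_⟩
  funext i
  by_cases hij : i = j
  · subst hij
    rw [Pi.single_eq_same]
    exact h2 _ ((hmem i).mpr rfl)
  · rw [Pi.single_eq_of_ne hij]
    by_contra hw
    exact hij ((hmem i).mp hw)

lemma key {s : ℕ} (hs : 1 ≤ s) (B : Set (Fin s → ZMod 2))
    (h : ∀ v : Fin s → (Fin s → ZMod 2), LinearIndependent (ZMod 2) v → ∃ j, v j ∈ B) :
    2 ^ (s - 1) ≤ B.ncard := by
  classical
  set C := Bᶜ with hC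
  have hfins : Module.finrank (ZMod 2) (Fin s → ZMod 2) = s :=
    Module.finrank_fin_fun (ZMod 2)
  have hspan : Submodule.span (ZMod 2) C ≠ ⊤ := by
    intro htop
    obtain ⟨t, htC, hts, hli⟩ := exists_linearIndependent (ZMod 2) C
    rw [htop] at hts
    haveI : Fintype t := (Set.toFinite t).fintype
    let b : Module.Basis t (ZMod 2) (Fin s → ZMod 2) :=
      Module.Basis.mk hli (by rw [Subtype.range_coe, hts])
    have hcard : Fintype.card t = s := by
      have hb := Module.finrank_eq_card_basis b
      rw [hfins] at hb
      exact hb.symm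
    let e : Fin s ≃ t := (Fintype.equivFinOfCardEq hcard).symm
    obtain ⟨j, hj⟩ := h (fun j => ((e j : t) : Fin s → ZMod 2))
      (hli.comp e e.injective)
    exact (htC (e j).2) hj
  have hlt : Submodule.span (ZMod 2) C < ⊤ := lt_top_iff_ne_top.mpr hspan
  have hrk : Module.finrank (ZMod 2) (Submodule.span (ZMod 2) C) < s := by
    have := Submodule.finrank_lt (K := ZMod 2) hlt.ne
    rwa [hfins] at this
  have hCcard : C.ncard ≤ 2 ^ (s - 1) := by
    have h1 : C.ncard ≤ (↑(Submodule.span (ZMod 2) C) : Set (Fin s → ZMod 2)).ncard :=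
      Set.ncard_le_ncard Submodule.subset_span (Set.toFinite _)
    have h2 : (↑(Submodule.span (ZMod 2) C) : Set (Fin s → ZMod 2)).ncard
        = Nat.card (Submodule.span (ZMod 2) C) := (Nat.card_coe_set_eq _).symm
    have h3 : Nat.card (Submodule.span (ZMod 2) C)
        = 2 ^ Module.finrank (ZMod 2) (Submodule.span (ZMod 2) C) := by
      rw [Nat.card_eq_fintype_card]
      have := Module.card_eq_pow_finrank (K := ZMod 2) (V := Submodule.span (ZMod 2) C)
      simpa using this
    have h4 : (2:ℕ) ^ Module.finrank (ZMod 2) (Submodule.span (ZMod 2) C) ≤ 2 ^ (s-1) :=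
      Nat.pow_le_pow_right (by norm_num) (by omega)
    omega
  have htot : B.ncard + C.ncard = 2 ^ s := by
    have := Set.ncard_add_ncard_compl B
    rw [← hC] at this
    rw [this]
    simp [Nat.card_eq_fintype_card]
  have hpow : 2 ^ s = 2 ^ (s - 1) + 2 ^ (s - 1) := by
    obtain ⟨k, rfl⟩ : ∃ k, s = k + 1 := ⟨s - 1, by omega⟩
    simp [pow_succ]
    ring
  omega

open Matrix

/-- A generic `(r,s)`-set meets at least `2^(s-1)` cosets of every `(r-s)`-dimensional
subspace `V` of `F₂^r`. -/
theorem statement3 (r s : ℕ) (hs : 2 ≤ s) (hsr : s ≤ r) (A : Set (Fin r → ZMod 2))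
    (hA : IsGenericSet r s A) (V : Submodule (ZMod 2) (Fin r → ZMod 2))
    (hV : Module.finrank (ZMod 2) V = r - s) :
    2 ^ (s - 1) ≤ Set.ncard (⇑V.mkQ '' A) := by
  classical
  -- quotient has dimension s
  have hqr : Module.finrank (ZMod 2) ((Fin r → ZMod 2) ⧸ V) = s := by
    have h1 := Submodule.finrank_quotient_add_finrank V
    rw [hV, Module.finrank_fin_fun (ZMod 2)] at h1
    omega
  have e : ((Fin r → ZMod 2) ⧸ V) ≃ₗ[ZMod 2] (Fin s → ZMod 2) :=
    LinearEquiv.ofFinrankEq _ _ (by rw [hqr, Module.finrank_fin_fun (ZMod 2)])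
  set L : (Fin r → ZMod 2) →ₗ[ZMod 2] (Fin s → ZMod 2) := e.toLinearMap ∘ₗ V.mkQ with hL
  have hLsurj : Function.Surjective L := e.surjective.comp (Submodule.mkQ_surjective V)
  set B : Set (Fin s → ZMod 2) := L '' A with hB
  -- key property
  have hkey : ∀ v : Fin s → (Fin s → ZMod 2), LinearIndependent (ZMod 2) v → ∃ j, v j ∈ B := by
    intro v hv
    set P : Matrix (Fin s) (Fin s) (ZMod 2) := Matrix.of v with hP
    have hPu : IsUnit P := Matrix.linearIndependent_rows_iff_isUnit.mp hv
    obtain ⟨u, hu⟩ := hPu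
    set S : Matrix (Fin s) (Fin s) (ZMod 2) := ↑u⁻¹ with hSdef
    have hSP : S * P = 1 := by rw [hSdef, ← hu]; exact u.inv_mul
    have hPS : P * S = 1 := by rw [hSdef, ← hu]; exact u.mul_inv
    set M0 : Matrix (Fin r) (Fin s) (ZMod 2) := (LinearMap.toMatrix' L)ᵀ with hM0
    have hvm : ∀ a, Matrix.vecMul a M0 = L a := by
      intro a
      rw [hM0, Matrix.vecMul_transpose]
      have := Matrix.toLin'_toMatrix' L
      calc LinearMap.toMatrix' L *ᵥ a = Matrix.toLin' (LinearMap.toMatrix' L) a := rfl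
        _ = L a := by rw [this]
    set M : Matrix (Fin r) (Fin s) (ZMod 2) := M0 * S with hM
    have hvmM : ∀ a, Matrix.vecMul a M = Matrix.vecMul (L a) S := by
      intro a
      rw [hM, ← Matrix.vecMul_vecMul, hvm]
    have hrank : M.rank = s := by
      have hsurjM : Function.Surjective (Mᵀ.mulVecLin) := by
        intro t
        obtain ⟨a, ha⟩ := hLsurj (Matrix.vecMul t P)
        refine ⟨a, ?_⟩
        rw [Matrix.mulVecLin_apply, Matrix.mulVec_transpose, hvmM, ha,
          Matrix.vecMul_vecMul, hPS, Matrix.vecMul_one]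
      rw [← Matrix.rank_transpose, Matrix.rank, LinearMap.range_eq_top.mpr hsurjM,
        finrank_top, Module.finrank_fin_fun (ZMod 2)]
    obtain ⟨a, haA, hnorm⟩ := hA M hrank
    rw [hvmM] at hnorm
    obtain ⟨j, hj⟩ := norm_one_single _ hnorm
    refine ⟨j, ?_⟩
    have : L a = v j := by
      have h1 : Matrix.vecMul (Matrix.vecMul (L a) S) P = L a := by
        rw [Matrix.vecMul_vecMul, hSP, Matrix.vecMul_one]
      rw [hj, Matrix.single_one_vecMul] at h1
      exact h1.symm
    exact ⟨a, haA, this⟩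
  have hcount := key (by omega) B hkey
  have himg : B = ⇑e '' (⇑V.mkQ '' A) := by
    rw [hB, ← Set.image_comp]
    rfl
  rw [himg, Set.ncard_image_of_injective _ e.injective] at hcount
  exact hcount
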